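/- Let P be a polynomial of degree d ≥ 1. For t ∈ ℂ define F_t : ℂ³ → ℂ³ by F_t(x,y,z) = ( x + Σ_{k=1}^{d} (−1)^k y^{k−1} t^k P^{(k)}(z)/k!, y, z − yt ), where P^{(k)} is the k-th derivative of P. Then: (1) F_0 is the identity and F_s ∘ F_t = F_{s+t} for all s, t ∈ ℂ, so t ↦ F_t is an action of the additive group (ℂ,+) on ℂ³ by bijections preserving the y-coordinate; (2) F_t maps X = {(x,y,z) ∈ ℂ³ : x·y = P(z)} into itself for every t ∈ ℂ; (3) for every (x,y,z) ∈ X with y ≠ 0, the first coordinate of F_t(x,y,z) equals (1/y)·P(z − yt). -/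

import Mathlib

open Polynomial Nat


/-- F_t(x,y,z) = ( x + Σ_{k=1}^{d} (−1)^k y^{k−1} t^k P^{(k)}(z)/k!, y, z − yt ),
    where d = deg P and P^{(k)} is the k-th derivative of P. -/
noncomputable def Fflow (P : Polynomial ℂ) (t : ℂ) (p : ℂ × ℂ × ℂ) : ℂ × ℂ × ℂ :=
  (p.1 + ∑ k ∈ Finset.Icc 1 P.natDegree,
      (-1) ^ k * p.2.1 ^ (k - 1) * t ^ k *
        ((fun q => Polynomial.derivative q)^[k] P).eval p.2.2 / (Nat.factorial k : ℂ),
   p.2.1, p.2.2 - p.2.1 * t)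



noncomputable def Ssum (P : Polynomial ℂ) (y t z : ℂ) : ℂ :=
  ∑ k ∈ Finset.Icc 1 P.natDegree,
      (-1) ^ k * y ^ (k - 1) * t ^ k *
        ((fun q => Polynomial.derivative q)^[k] P).eval z / (Nat.factorial k : ℂ)

lemma iter_deriv_eval (P : Polynomial ℂ) (k : ℕ) (z : ℂ) :
    ((fun q => Polynomial.derivative q)^[k] P).eval z = (k ! : ℂ) * (hasseDeriv k P).eval z := by
  have h := congrFun (factorial_smul_hasseDeriv (R := ℂ) k) P
  simp at h
  rw [← h]; simp [mul_comm]

lemma taylor_sum (P : Polynomial ℂ) (z w : ℂ) :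
    P.eval (z + w) = ∑ k ∈ Finset.range (P.natDegree + 1),
      (hasseDeriv k P).eval z * w ^ k := by
  have h1 : P.eval (z + w) = (taylor z P).eval w := by rw [taylor_eval]; ring_nf
  rw [h1, Polynomial.eval_eq_sum_range' (n := P.natDegree + 1)
      (by rw [natDegree_taylor]; omega) w]
  refine Finset.sum_congr rfl fun k _ => by rw [taylor_coeff]

lemma keyS (P : Polynomial ℂ) (y t z : ℂ) :
    y * Ssum P y t z = P.eval (z - y * t) - P.eval z := by
  have ht : P.eval (z - y * t) = ∑ k ∈ Finset.range (P.natDegree + 1),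
      (hasseDeriv k P).eval z * (-(y * t)) ^ k := by
    have := taylor_sum P z (-(y * t)); rw [← this]; ring_nf
  have hset : Finset.range (P.natDegree + 1) = insert 0 (Finset.Icc 1 P.natDegree) := by
    ext k; simp [Nat.lt_succ_iff]; omega
  rw [ht, hset, Finset.sum_insert (by simp)]
  simp only [pow_zero, mul_one, hasseDeriv_zero, LinearMap.id_coe, id_eq]
  rw [Ssum, Finset.mul_sum]
  have : ∀ k ∈ Finset.Icc 1 P.natDegree,
      y * ((-1) ^ k * y ^ (k - 1) * t ^ k *
        ((fun q => Polynomial.derivative q)^[k] P).eval z / (Nat.factorial k : ℂ))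
      = (hasseDeriv k P).eval z * (-(y * t)) ^ k := by
    intro k hk
    have hk1 : 1 ≤ k := (Finset.mem_Icc.mp hk).1
    have hy : y * y ^ (k - 1) = y ^ k := by
      conv_rhs => rw [← Nat.sub_add_cancel hk1]
      rw [pow_succ]; ring
    have hfac : (k ! : ℂ) ≠ 0 := Nat.cast_ne_zero.mpr (Nat.factorial_ne_zero k)
    rw [iter_deriv_eval]
    field_simp
    rw [neg_pow (y * t) k, mul_pow]
    linear_combination ((-1:ℂ) ^ k * t ^ k * (hasseDeriv k P).eval z) * hy
  rw [Finset.sum_congr rfl this]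
  ring

lemma Ssum_ne_zero (P : Polynomial ℂ) (y t z : ℂ) (hy : y ≠ 0) :
    Ssum P y t z = y⁻¹ * (P.eval (z - y * t) - P.eval z) := by
  have := keyS P y t z
  field_simp
  linear_combination this

lemma Ssum_cont (P : Polynomial ℂ) (t z : ℂ) (a : ℂ) :
    Continuous (fun y : ℂ => Ssum P y t (z - y * a)) := by
  unfold Ssum
  apply continuous_finset_sum
  intro k _
  apply Continuous.div_const
  apply Continuous.mul
  · fun_prop
  · exact (Polynomial.continuous _).comp (by fun_prop)

lemma Ssum_add (P : Polynomial ℂ) (s t z : ℂ) (y : ℂ) :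
    Ssum P y t z + Ssum P y s (z - y * t) = Ssum P y (s + t) z := by
  have h1 : Continuous (fun y : ℂ => Ssum P y t z + Ssum P y s (z - y * t)) := by
    have := Ssum_cont P t z 0
    simp only [mul_zero, sub_zero] at this
    exact this.add (Ssum_cont P s z t)
  have h2 : Continuous (fun y : ℂ => Ssum P y (s + t) z) := by
    have := Ssum_cont P (s + t) z 0
    simpa using this
  have heq : Set.EqOn (fun y : ℂ => Ssum P y t z + Ssum P y s (z - y * t))
      (fun y : ℂ => Ssum P y (s + t) z) {(0:ℂ)}ᶜ := by
    intro y hy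
    have hy0 : y ≠ 0 := hy
    simp only
    rw [Ssum_ne_zero P y t z hy0, Ssum_ne_zero P y s _ hy0, Ssum_ne_zero P y (s+t) z hy0]
    have : z - y * t - y * s = z - y * (s + t) := by ring
    rw [this]
    field_simp
    ring
  have := h1.ext_on (dense_compl_singleton (0:ℂ)) h2 heq
  exact congrFun this y

lemma Ssum_zero (P : Polynomial ℂ) (y z : ℂ) : Ssum P y 0 z = 0 := by
  apply Finset.sum_eq_zero
  intro k hk
  have : k ≠ 0 := by have := (Finset.mem_Icc.mp hk).1; omega
  simp [zero_pow this]

lemma Fflow_eq (P : Polynomial ℂ) (t : ℂ) (p : ℂ × ℂ × ℂ) :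
    Fflow P t p = (p.1 + Ssum P p.2.1 t p.2.2, p.2.1, p.2.2 - p.2.1 * t) := rfl

theorem stmt13 (P : Polynomial ℂ) (hdeg : 1 ≤ P.natDegree) :
    (∀ p : ℂ × ℂ × ℂ, Fflow P 0 p = p) ∧
    (∀ s t : ℂ, ∀ p : ℂ × ℂ × ℂ, Fflow P s (Fflow P t p) = Fflow P (s + t) p) ∧
    (∀ t : ℂ, Function.Bijective (Fflow P t)) ∧
    (∀ t : ℂ, ∀ p : ℂ × ℂ × ℂ, (Fflow P t p).2.1 = p.2.1) ∧
    (∀ t : ℂ, ∀ p : ℂ × ℂ × ℂ, p.1 * p.2.1 = P.eval p.2.2 →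
      (Fflow P t p).1 * (Fflow P t p).2.1 = P.eval (Fflow P t p).2.2) ∧
    (∀ t : ℂ, ∀ p : ℂ × ℂ × ℂ, p.1 * p.2.1 = P.eval p.2.2 → p.2.1 ≠ 0 →
      (Fflow P t p).1 = p.2.1⁻¹ * P.eval (p.2.2 - p.2.1 * t)) := by
  have key := keyS P
  have h0 : ∀ p : ℂ × ℂ × ℂ, Fflow P 0 p = p := by
    intro p
    rw [Fflow_eq, Ssum_zero]
    simp
  have hadd : ∀ s t : ℂ, ∀ p : ℂ × ℂ × ℂ,
      Fflow P s (Fflow P t p) = Fflow P (s + t) p := by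
    intro s t p
    rw [Fflow_eq, Fflow_eq, Fflow_eq]
    refine Prod.ext ?_ (Prod.ext rfl ?_)
    · simp only
      rw [add_assoc, Ssum_add]
    · simp only; ring
  refine ⟨h0, hadd, ?_, ?_, ?_, ?_⟩
  · intro t
    refine Function.bijective_iff_has_inverse.mpr ⟨Fflow P (-t), fun p => ?_, fun p => ?_⟩
    · rw [hadd, neg_add_cancel, h0]
    · rw [hadd, add_neg_cancel, h0]
  · intro t p; rfl
  · intro t p hp
    rw [Fflow_eq]
    simp only
    have := key p.2.1 t p.2.2
    linear_combination this + hp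
  · intro t p hp hy
    rw [Fflow_eq]
    simp only
    have hkey := key p.2.1 t p.2.2
    field_simp
    linear_combination hkey + hp
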